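/- For every integer w ≥ 1: ∫_{−∞}^{∞} ∫_{−1}^{1} 1/(1−ixt)^{w+2} dt dx = 2π/(w+1). -/

import Mathlib

open MeasureTheory Complex Real Filter Topology

section Statement13Aux

lemma ne_sub (c : ℝ) : (1 - Complex.I * c : ℂ) ≠ 0 := by
  intro h; have := congrArg Complex.re h; simp at this

lemma ne_add (c : ℝ) : (1 + Complex.I * c : ℂ) ≠ 0 := by
  intro h; have := congrArg Complex.re h; simp at this
noncomputable def gfun (n : ℕ) (x : ℝ) : ℂ :=
  ((1 + Complex.I * x) ^ n - (1 - Complex.I * x) ^ n)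
    / (2 * Complex.I * x * (1 + (x:ℂ)^2) ^ n)

lemma hprod (x : ℝ) : (1 + (x:ℂ)^2) = (1 - Complex.I * x) * (1 + Complex.I * x) := by
  ring_nf
  rw [Complex.I_sq]
  ring

lemma alg_one (u : ℂ) (hu : u ≠ 0) (ha : (1-u) ≠ 0) (hb : (1+u) ≠ 0) :
    ((1+u)^1 - (1-u)^1) / (2*u*((1-u)*(1+u))^1) = ((1-u)*(1+u))⁻¹ := by
  field_simp
  ring

lemma alg_diff (n : ℕ) (u : ℂ) (hu : u ≠ 0) (ha : (1-u) ≠ 0) (hb : (1+u) ≠ 0) :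
    ((1+u)^(n+1) - (1-u)^(n+1)) / (2*u*((1-u)^(n+1)*(1+u)^(n+1)))
      = ((1+u)^n - (1-u)^n) / (2*u*((1-u)^n*(1+u)^n))
        + (2:ℂ)⁻¹ * (((1-u)^(n+1))⁻¹ + ((1+u)^(n+1))⁻¹) := by
  have d2 : (2*u*((1-u)^(n+1)*(1+u)^(n+1))) ≠ 0 := by
    refine mul_ne_zero (mul_ne_zero two_ne_zero hu) (mul_ne_zero ?_ ?_) <;>
      exact pow_ne_zero _ (by assumption)
  have d1 : (2*u*((1-u)^n*(1+u)^n)) ≠ 0 := by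
    refine mul_ne_zero (mul_ne_zero two_ne_zero hu) (mul_ne_zero ?_ ?_) <;>
      exact pow_ne_zero _ (by assumption)
  have e1 : ((1+u)^n - (1-u)^n) / (2*u*((1-u)^n*(1+u)^n))
      = (((1+u)^n - (1-u)^n)*((1-u)*(1+u))) / (2*u*((1-u)^(n+1)*(1+u)^(n+1))) := by
    rw [div_eq_div_iff d1 d2]
    ring
  have e2 : (2:ℂ)⁻¹ * (((1-u)^(n+1))⁻¹ + ((1+u)^(n+1))⁻¹)
      = (u*((1-u)^(n+1) + (1+u)^(n+1))) / (2*u*((1-u)^(n+1)*(1+u)^(n+1))) := by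
    rw [eq_div_iff d2]
    have h1 : ((1-u)^(n+1) : ℂ) ≠ 0 := pow_ne_zero _ ha
    have h2 : ((1+u)^(n+1) : ℂ) ≠ 0 := pow_ne_zero _ hb
    field_simp
    ring
  rw [e1, e2, ← add_div]
  congr 1
  ring

lemma g_one (x : ℝ) (hx : x ≠ 0) : gfun 1 x = ((1 : ℂ) + (x:ℂ)^2)⁻¹ := by
  have hcI : (Complex.I * x : ℂ) ≠ 0 := by
    simp [Complex.I_ne_zero, Complex.ofReal_eq_zero, hx]
  unfold gfun
  rw [hprod, show (2 * Complex.I * (x:ℂ)) = 2 * (Complex.I * x) by ring]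
  exact alg_one _ hcI (ne_sub x) (ne_add x)

lemma g_diff (n : ℕ) (x : ℝ) (hx : x ≠ 0) :
    gfun (n+1) x = gfun n x
      + (2:ℂ)⁻¹ * (((1 - Complex.I * x) ^ (n+1))⁻¹ + ((1 + Complex.I * x) ^ (n+1))⁻¹) := by
  have hcI : (Complex.I * x : ℂ) ≠ 0 := by
    simp [Complex.I_ne_zero, Complex.ofReal_eq_zero, hx]
  unfold gfun
  rw [hprod, mul_pow, mul_pow, show (2 * Complex.I * (x:ℂ)) = 2 * (Complex.I * x) by ring]
  exact alg_diff n _ hcI (ne_sub x) (ne_add x)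

lemma hasDerivAt_coe (t : ℝ) : HasDerivAt (fun s : ℝ => (s : ℂ)) 1 t := by
  simpa using (hasDerivAt_id t).ofReal_comp

lemma inner_eq (m : ℕ) (x : ℝ) (hx : x ≠ 0) :
    ∫ t in Set.Icc (-1 : ℝ) 1, 1 / (1 - Complex.I * x * t) ^ (m + 2)
      = ((1 + Complex.I * x) ^ (m+1) - (1 - Complex.I * x) ^ (m+1))
        / (Complex.I * x * (m+1) * (1 + (x:ℂ)^2) ^ (m+1)) := by
  have hne : ∀ t : ℝ, (1 - Complex.I * x * t : ℂ) ≠ 0 := by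
    intro t
    have := ne_sub (x * t)
    rwa [Complex.ofReal_mul, ← mul_assoc] at this
  have hcI : (Complex.I * x : ℂ) ≠ 0 := by
    simp [Complex.I_ne_zero, Complex.ofReal_eq_zero, hx]
  have hderiv : ∀ t ∈ Set.uIcc (-1 : ℝ) 1,
      HasDerivAt (fun t : ℝ => (Complex.I * x * ((m:ℂ)+1))⁻¹ * ((1 - Complex.I * x * t) ^ (m+1))⁻¹)
        (1 / (1 - Complex.I * x * t) ^ (m + 2)) t := by
    intro t _
    have h1 : HasDerivAt (fun s : ℂ => (1 - Complex.I * x * s : ℂ)) (-(Complex.I * x)) (t:ℂ) := by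
      simpa using ((hasDerivAt_id (t:ℂ)).const_mul (Complex.I * x)).const_sub 1
    have h2 := h1.pow (m+1)
    have h3 := h2.inv (pow_ne_zero _ (hne t))
    have h4 := (h3.const_mul ((Complex.I * x * ((m:ℂ)+1) : ℂ))⁻¹).comp_ofReal
    have hmm : ((m:ℂ)+1) ≠ 0 := Nat.cast_add_one_ne_zero m
    have h5 : (Complex.I * x * ((m:ℂ)+1))⁻¹ *
        (-(((m+1 : ℕ):ℂ) * (1 - Complex.I * x * t) ^ (m + 1 - 1) * -(Complex.I * x)) /
          ((1 - Complex.I * x * t) ^ (m + 1)) ^ 2)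
        = 1 / (1 - Complex.I * x * t) ^ (m + 2) := by
      simp only [Nat.add_sub_cancel]
      push_cast
      set A := (1 - Complex.I * x * t : ℂ) with hAdef
      have hA : A ≠ 0 := hne t
      field_simp [hcI, hmm, hA, Complex.ofReal_ne_zero.mpr hx]
      ring
    simp only [Pi.inv_apply, Pi.pow_apply] at h4
    rw [h5] at h4
    exact h4
  have hcont : Continuous fun t : ℝ => 1 / (1 - Complex.I * x * t : ℂ) ^ (m + 2) := by
    apply Continuous.div continuous_const
    · exact ((continuous_const.sub (continuous_const.mul Complex.continuous_ofReal)).pow _)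
    · exact fun t => pow_ne_zero _ (hne t)
  rw [MeasureTheory.integral_Icc_eq_integral_Ioc,
    ← intervalIntegral.integral_of_le (by norm_num : (-1:ℝ) ≤ 1)]
  rw [intervalIntegral.integral_eq_sub_of_hasDerivAt hderiv (hcont.intervalIntegrable _ _)]
  have hA : (1 - Complex.I * x * ((1:ℝ):ℂ) : ℂ) = 1 - Complex.I * x := by push_cast; ring
  have hB : (1 - Complex.I * x * ((-1:ℝ):ℂ) : ℂ) = 1 + Complex.I * x := by push_cast; ring
  have hprod : (1 + (x:ℂ)^2) = (1 - Complex.I * x) * (1 + Complex.I * x) := by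
    ring_nf
    rw [Complex.I_sq]
    ring
  have hmm : ((m:ℂ)+1) ≠ 0 := Nat.cast_add_one_ne_zero m
  rw [hA, hB, hprod]
  rw [mul_pow]
  field_simp [ne_sub x, ne_add x]

lemma normsq_eq (c : ℝ) : ‖(1 - Complex.I * c : ℂ)‖^2 = 1 + c^2 := by
  rw [Complex.sq_norm]
  simp [Complex.normSq_apply]; ring

lemma normsq_eq' (c : ℝ) : ‖(1 + Complex.I * c : ℂ)‖^2 = 1 + c^2 := by
  rw [Complex.sq_norm]
  simp [Complex.normSq_apply]; ring

lemma one_le_norm_sub (c : ℝ) : 1 ≤ ‖(1 - Complex.I * c : ℂ)‖ := by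
  nlinarith [normsq_eq c, norm_nonneg (1 - Complex.I * (c:ℂ)), sq_nonneg c]

lemma one_le_norm_add (c : ℝ) : 1 ≤ ‖(1 + Complex.I * c : ℂ)‖ := by
  nlinarith [normsq_eq' c, norm_nonneg (1 + Complex.I * (c:ℂ)), sq_nonneg c]

lemma abs_le_norm_sub (c : ℝ) : |c| ≤ ‖(1 - Complex.I * c : ℂ)‖ := by
  nlinarith [normsq_eq c, norm_nonneg (1 - Complex.I * (c:ℂ)), abs_nonneg c, _root_.sq_abs c]

lemma abs_le_norm_add (c : ℝ) : |c| ≤ ‖(1 + Complex.I * c : ℂ)‖ := by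
  nlinarith [normsq_eq' c, norm_nonneg (1 + Complex.I * (c:ℂ)), abs_nonneg c, _root_.sq_abs c]

-- generic versions for b x = 1 ± I x
section
variable (e : ℝ) (he : e = 1 ∨ e = -1)

lemma integrable_aux (m : ℕ) (b : ℝ → ℂ) (hb1 : ∀ x, 1 ≤ ‖b x‖)
    (hb2 : ∀ x, ‖b x‖^2 = 1 + x^2) (hc : Continuous b) (hne : ∀ x, b x ≠ 0) :
    Integrable (fun x : ℝ => ((b x) ^ (m+2))⁻¹) := by
  refine Integrable.mono integrable_inv_one_add_sq
    ((hc.pow _).inv₀ (fun x => pow_ne_zero _ (hne x))).aestronglyMeasurable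
    (ae_of_all _ fun x => ?_)
  rw [norm_inv, norm_pow]
  have h1 : (1:ℝ) + x^2 ≤ ‖b x‖^(m+2) := by
    calc (1:ℝ) + x^2 = ‖b x‖^2 := (hb2 x).symm
    _ ≤ ‖b x‖^(m+2) := pow_le_pow_right₀ (hb1 x) (by omega)
  rw [norm_inv, Real.norm_eq_abs, abs_of_pos (by positivity)]
  exact inv_anti₀ (by positivity) h1

lemma tendsto_norm_pow_atTop (m : ℕ) (b : ℝ → ℂ) (hb1 : ∀ x, 1 ≤ ‖b x‖)
    (hb3 : ∀ x, |x| ≤ ‖b x‖) :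
    Tendsto (fun x : ℝ => ‖(b x) ^ (m+1)‖) atTop atTop := by
  refine tendsto_atTop_mono (fun x => ?_) tendsto_abs_atTop_atTop
  rw [norm_pow]
  calc |x| ≤ ‖b x‖ := hb3 x
  _ ≤ ‖b x‖^(m+1) := le_self_pow₀ (hb1 x) (by omega)

lemma tendsto_norm_pow_atBot (m : ℕ) (b : ℝ → ℂ) (hb1 : ∀ x, 1 ≤ ‖b x‖)
    (hb3 : ∀ x, |x| ≤ ‖b x‖) :
    Tendsto (fun x : ℝ => ‖(b x) ^ (m+1)‖) atBot atTop := by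
  refine tendsto_atTop_mono (fun x => ?_) tendsto_abs_atBot_atTop
  rw [norm_pow]
  calc |x| ≤ ‖b x‖ := hb3 x
  _ ≤ ‖b x‖^(m+1) := le_self_pow₀ (hb1 x) (by omega)

lemma tendsto_inv_pow_zero (m : ℕ) (b : ℝ → ℂ) (l : Filter ℝ)
    (h : Tendsto (fun x : ℝ => ‖(b x) ^ (m+1)‖) l atTop) (c : ℂ) :
    Tendsto (fun x : ℝ => c * ((b x) ^ (m+1))⁻¹) l (𝓝 0) := by
  have : Tendsto (fun x : ℝ => ((b x) ^ (m+1))⁻¹) l (𝓝 0) :=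
    tendsto_zero_iff_norm_tendsto_zero.2 (by
      simpa [norm_inv, Function.comp_def] using tendsto_inv_atTop_zero.comp h)
  simpa using this.const_mul c

end

lemma int_zero_sub (m : ℕ) : ∫ x : ℝ, ((1 - Complex.I * x) ^ (m+2))⁻¹ = 0 := by
  have hmm : ((m:ℂ)+1) ≠ 0 := Nat.cast_add_one_ne_zero m
  have hderiv : ∀ x : ℝ, HasDerivAt
      (fun x : ℝ => (-Complex.I/((m:ℂ)+1)) * ((1 - Complex.I * x) ^ (m+1))⁻¹)
      (((1 - Complex.I * x) ^ (m+2))⁻¹) x := by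
    intro x
    have h1 : HasDerivAt (fun s : ℂ => (1 - Complex.I * s : ℂ)) (-Complex.I) (x:ℂ) := by
      simpa using ((hasDerivAt_id (x:ℂ)).const_mul Complex.I).const_sub 1
    have h2 := h1.pow (m+1)
    have h3 := h2.inv (pow_ne_zero _ (ne_sub x))
    have h4 := (h3.const_mul (-Complex.I/((m:ℂ)+1))).comp_ofReal
    have h5 : (-Complex.I/((m:ℂ)+1)) *
        (-(((m+1 : ℕ):ℂ) * (1 - Complex.I * x) ^ (m + 1 - 1) * -Complex.I) /
          ((1 - Complex.I * x) ^ (m + 1)) ^ 2)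
        = ((1 - Complex.I * x) ^ (m+2))⁻¹ := by
      simp only [Nat.add_sub_cancel]
      push_cast
      set A := (1 - Complex.I * x : ℂ) with hAdef
      have hA : A ≠ 0 := ne_sub x
      have hI3 : Complex.I^3 = -Complex.I := by
        rw [pow_succ, Complex.I_sq]; ring
      have hI4 : Complex.I^4 = 1 := by
        rw [show (4:ℕ) = 2*2 from rfl, pow_mul, Complex.I_sq]; ring
      field_simp
      ring_nf
      simp only [Complex.I_sq, hI3, hI4]
      ring
    simp only [Pi.inv_apply, Pi.pow_apply] at h4
    rw [h5] at h4
    exact h4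
  have hint := integrable_aux m (fun x => 1 - Complex.I * x) one_le_norm_sub normsq_eq
    (continuous_const.sub (continuous_const.mul Complex.continuous_ofReal)) ne_sub
  have htop := tendsto_inv_pow_zero m (fun x => 1 - Complex.I * x) atTop
    (tendsto_norm_pow_atTop m _ one_le_norm_sub abs_le_norm_sub) (-Complex.I/((m:ℂ)+1))
  have hbot := tendsto_inv_pow_zero m (fun x => 1 - Complex.I * x) atBot
    (tendsto_norm_pow_atBot m _ one_le_norm_sub abs_le_norm_sub) (-Complex.I/((m:ℂ)+1))
  simpa using MeasureTheory.integral_of_hasDerivAt_of_tendsto hderiv hint hbot htop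

lemma int_zero_add (m : ℕ) : ∫ x : ℝ, ((1 + Complex.I * x) ^ (m+2))⁻¹ = 0 := by
  have hmm : ((m:ℂ)+1) ≠ 0 := Nat.cast_add_one_ne_zero m
  have hderiv : ∀ x : ℝ, HasDerivAt
      (fun x : ℝ => (Complex.I/((m:ℂ)+1)) * ((1 + Complex.I * x) ^ (m+1))⁻¹)
      (((1 + Complex.I * x) ^ (m+2))⁻¹) x := by
    intro x
    have h1 : HasDerivAt (fun s : ℂ => (1 + Complex.I * s : ℂ)) (Complex.I) (x:ℂ) := by
      simpa using ((hasDerivAt_id (x:ℂ)).const_mul Complex.I).const_add 1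
    have h2 := h1.pow (m+1)
    have h3 := h2.inv (pow_ne_zero _ (ne_add x))
    have h4 := (h3.const_mul (Complex.I/((m:ℂ)+1))).comp_ofReal
    have h5 : (Complex.I/((m:ℂ)+1)) *
        (-(((m+1 : ℕ):ℂ) * (1 + Complex.I * x) ^ (m + 1 - 1) * Complex.I) /
          ((1 + Complex.I * x) ^ (m + 1)) ^ 2)
        = ((1 + Complex.I * x) ^ (m+2))⁻¹ := by
      simp only [Nat.add_sub_cancel]
      push_cast
      set A := (1 + Complex.I * x : ℂ) with hAdef
      have hA : A ≠ 0 := ne_add x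
      have hI3 : Complex.I^3 = -Complex.I := by
        rw [pow_succ, Complex.I_sq]; ring
      have hI4 : Complex.I^4 = 1 := by
        rw [show (4:ℕ) = 2*2 from rfl, pow_mul, Complex.I_sq]; ring
      field_simp
      ring_nf
      simp only [Complex.I_sq, hI3, hI4]
      ring
    simp only [Pi.inv_apply, Pi.pow_apply] at h4
    rw [h5] at h4
    exact h4
  have hint := integrable_aux m (fun x => 1 + Complex.I * x) one_le_norm_add normsq_eq'
    (continuous_const.add (continuous_const.mul Complex.continuous_ofReal)) ne_add
  have htop := tendsto_inv_pow_zero m (fun x => 1 + Complex.I * x) atTop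
    (tendsto_norm_pow_atTop m _ one_le_norm_add abs_le_norm_add) (Complex.I/((m:ℂ)+1))
  have hbot := tendsto_inv_pow_zero m (fun x => 1 + Complex.I * x) atBot
    (tendsto_norm_pow_atBot m _ one_le_norm_add abs_le_norm_add) (Complex.I/((m:ℂ)+1))
  simpa using MeasureTheory.integral_of_hasDerivAt_of_tendsto hderiv hint hbot htop


lemma integrable_sub2 (m : ℕ) : Integrable (fun x : ℝ => ((1 - Complex.I * x) ^ (m+2))⁻¹) :=
  integrable_aux m (fun x => 1 - Complex.I * x) one_le_norm_sub normsq_eq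
    (continuous_const.sub (continuous_const.mul Complex.continuous_ofReal)) ne_sub

lemma integrable_add2 (m : ℕ) : Integrable (fun x : ℝ => ((1 + Complex.I * x) ^ (m+2))⁻¹) :=
  integrable_aux m (fun x => 1 + Complex.I * x) one_le_norm_add normsq_eq'
    (continuous_const.add (continuous_const.mul Complex.continuous_ofReal)) ne_add

lemma ae_ne_zero : ∀ᵐ x : ℝ, x ≠ 0 := by
  have h : volume ({0} : Set ℝ) = 0 := volume_singleton
  filter_upwards [compl_mem_ae_iff.mpr h] with x hx
  simpa using hx

lemma g_key : ∀ n : ℕ, 1 ≤ n → Integrable (gfun n) ∧ ∫ x : ℝ, gfun n x = (π : ℂ) := by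
  intro n hn
  induction n, hn using Nat.le_induction with
  | base =>
    have hae : gfun 1 =ᵐ[volume] fun x : ℝ => (((1 + x^2)⁻¹ : ℝ) : ℂ) := by
      filter_upwards [ae_ne_zero] with x hx
      rw [g_one x hx]
      push_cast
      ring
    constructor
    · exact (integrable_inv_one_add_sq.ofReal).congr hae.symm
    · rw [integral_congr_ae hae]
      have h2 : ∫ a : ℝ, (((1 + a^2)⁻¹ : ℝ) : ℂ) = ((∫ a : ℝ, (1 + a^2)⁻¹ : ℝ) : ℂ) :=
        integral_ofReal (𝕜 := ℂ) (f := fun a : ℝ => (1 + a^2)⁻¹)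
      rw [h2, integral_univ_inv_one_add_sq]
  | succ n hn ih =>
    obtain ⟨m, rfl⟩ : ∃ m, n = m + 1 := ⟨n - 1, by omega⟩
    set h : ℝ → ℂ := fun x =>
      (2:ℂ)⁻¹ * (((1 - Complex.I * x) ^ (m+2))⁻¹ + ((1 + Complex.I * x) ^ (m+2))⁻¹) with hdef
    have hint : Integrable h := ((integrable_sub2 m).add (integrable_add2 m)).const_mul _
    have hzero : ∫ x : ℝ, h x = 0 := by
      rw [hdef]
      simp only
      rw [MeasureTheory.integral_const_mul, integral_add (integrable_sub2 m) (integrable_add2 m),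
        int_zero_sub, int_zero_add]
      simp
    have hae : gfun (m+1+1) =ᵐ[volume] fun x => gfun (m+1) x + h x := by
      filter_upwards [ae_ne_zero] with x hx
      exact g_diff (m+1) x hx
    constructor
    · exact (ih.1.add hint).congr hae.symm
    · rw [integral_congr_ae hae, integral_add ih.1 hint, ih.2, hzero, add_zero]

end Statement13Aux

/-- For every integer `w ≥ 1`,
`∫_{−∞}^{∞} ∫_{−1}^{1} 1/(1−ixt)^{w+2} dt dx = 2π/(w+1)`. -/
theorem integral_integral_one_div_one_sub_I_mul_pow (w : ℕ) (hw : 1 ≤ w) :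
    ∫ x : ℝ, ∫ t in Set.Icc (-1 : ℝ) 1,
      1 / (1 - Complex.I * x * t) ^ (w + 2) = 2 * Real.pi / (w + 1) := by
  have hw1 : ((w:ℂ) + 1) ≠ 0 := Nat.cast_add_one_ne_zero w
  have hae : (fun x : ℝ => ∫ t in Set.Icc (-1 : ℝ) 1, 1 / (1 - Complex.I * x * t) ^ (w + 2))
      =ᵐ[volume] fun x : ℝ => (2 / ((w:ℂ)+1)) * gfun (w+1) x := by
    filter_upwards [ae_ne_zero] with x hx
    rw [inner_eq w x hx]
    unfold gfun
    have hcI : (Complex.I * x : ℂ) ≠ 0 := by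
      simp [Complex.I_ne_zero, Complex.ofReal_eq_zero, hx]
    have hp : ((1:ℂ) + (x:ℂ)^2) ≠ 0 := by
      rw [hprod]; exact mul_ne_zero (ne_sub x) (ne_add x)
    rw [div_mul_div_comm, div_eq_div_iff
      (by exact mul_ne_zero (mul_ne_zero hcI hw1) (pow_ne_zero _ hp))
      (by exact mul_ne_zero hw1 (mul_ne_zero (mul_ne_zero (mul_ne_zero two_ne_zero I_ne_zero)
        (Complex.ofReal_ne_zero.mpr hx)) (pow_ne_zero _ hp)))]
    push_cast
    ring
  rw [integral_congr_ae hae, MeasureTheory.integral_const_mul, (g_key (w+1) (by omega)).2]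
  push_cast
  ring
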